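/- For any n unit vectors φ_1,...,φ_n in ℂ^d and any t ≥ 1, Σ_{j,k} |⟨φ_j|φ_k⟩|^{2t} ≥ n² · t!·(d−1)!/(t+d−1)!. -/

import Mathlib

open Matrix BigOperators Finset

/-- for any n unit vectors in ℂ^d and t ≥ 1,
Σ_{j,k} |⟨φ_j|φ_k⟩|^{2t} ≥ n²·t!(d−1)!/(t+d−1)!. -/
theorem t_design_frame_potential_bound (d n t : ℕ) (hd : 0 < d) (ht : 1 ≤ t)
    (φ : Fin n → Fin d → ℂ)
    (hunit : ∀ k, star (φ k) ⬝ᵥ φ k = 1) :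
    (n : ℝ)^2 * (Nat.factorial t) * (Nat.factorial (d - 1))
        / (Nat.factorial (t + d - 1))
      ≤ (∑ j, ∑ k, ‖star (φ j) ⬝ᵥ φ k‖^(2 * t) : ℝ) := by
  classical
  set ψ : Fin n → Sym (Fin d) t → ℂ := fun k a =>
    (Real.sqrt ((a.1.countPerms : ℕ) : ℝ) : ℂ) * (a.1.map (φ k)).prod with hψ
  have conjψ : ∀ (k : Fin n) (a : Sym (Fin d) t),
      (starRingEnd ℂ) (ψ k a)
        = (Real.sqrt ((a.1.countPerms : ℕ) : ℝ) : ℂ)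
          * (a.1.map (fun i => (starRingEnd ℂ) (φ k i))).prod := by
    intro k a
    rw [hψ]
    rw [_root_.map_mul, Complex.conj_ofReal, map_multiset_prod, Multiset.map_map]
    rfl
  -- key identity: symmetric lift reproduces powers of inner products
  have key : ∀ j k : Fin n,
      ∑ a : Sym (Fin d) t, (starRingEnd ℂ) (ψ j a) * ψ k a = (star (φ j) ⬝ᵥ φ k) ^ t := by
    intro j k
    have hdp : star (φ j) ⬝ᵥ φ k = ∑ i, (starRingEnd ℂ) (φ j i) * φ k i := by
      simp [dotProduct, Complex.star_def]
    have expand := Finset.sum_pow (s := (univ : Finset (Fin d)))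
      (fun i => (starRingEnd ℂ) (φ j i) * φ k i) t
    rw [Finset.sym_univ] at expand
    rw [hdp, expand]
    refine Finset.sum_congr rfl fun a _ => ?_
    rw [conjψ, hψ]
    have hsq : (Real.sqrt ((a.1.countPerms : ℕ) : ℝ) : ℂ)
        * (Real.sqrt ((a.1.countPerms : ℕ) : ℝ) : ℂ) = ((a.1.countPerms : ℕ) : ℂ) := by
      rw [← Complex.ofReal_mul, Real.mul_self_sqrt (by positivity)]
      norm_cast
    calc (Real.sqrt ((a.1.countPerms : ℕ) : ℝ) : ℂ)
            * (a.1.map (fun i => (starRingEnd ℂ) (φ j i))).prod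
            * ((Real.sqrt ((a.1.countPerms : ℕ) : ℝ) : ℂ) * (a.1.map (φ k)).prod)
        = ((Real.sqrt ((a.1.countPerms : ℕ) : ℝ) : ℂ)
            * (Real.sqrt ((a.1.countPerms : ℕ) : ℝ) : ℂ))
          * ((a.1.map (fun i => (starRingEnd ℂ) (φ j i))).prod * (a.1.map (φ k)).prod) := by
          ring
      _ = ((a.1.countPerms : ℕ) : ℂ)
            * (a.1.map (fun i => (starRingEnd ℂ) (φ j i) * φ k i)).prod := by
          rw [hsq, Multiset.prod_map_mul]
  -- Gram entries
  set G : Fin n → Fin n → ℂ := fun j k =>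
    ∑ a : Sym (Fin d) t, (starRingEnd ℂ) (ψ j a) * ψ k a with hG
  set T : Sym (Fin d) t → Sym (Fin d) t → ℂ := fun a b =>
    ∑ k, ψ k a * (starRingEnd ℂ) (ψ k b) with hT
  have hGval : ∀ j k, G j k = (star (φ j) ⬝ᵥ φ k) ^ t := key
  -- swap identity
  have swap : ∑ j, ∑ k, G j k * (starRingEnd ℂ) (G j k)
      = ∑ a, ∑ b, T a b * (starRingEnd ℂ) (T a b) := by
    have hGexp : ∀ j k, G j k * (starRingEnd ℂ) (G j k)
        = ∑ a : Sym (Fin d) t, ∑ b : Sym (Fin d) t,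
            ((starRingEnd ℂ) (ψ j a) * ψ k a) * (ψ j b * (starRingEnd ℂ) (ψ k b)) := by
      intro j k
      have : (starRingEnd ℂ) (G j k) = ∑ b : Sym (Fin d) t, ψ j b * (starRingEnd ℂ) (ψ k b) := by
        simp [hG, map_sum, mul_comm]
      rw [this, hG]
      rw [Finset.sum_mul_sum]
    have hTexp : ∀ a b, T a b * (starRingEnd ℂ) (T a b)
        = ∑ j, ∑ k, (ψ j a * (starRingEnd ℂ) (ψ j b))
            * ((starRingEnd ℂ) (ψ k a) * ψ k b) := by
      intro a b
      have : (starRingEnd ℂ) (T a b) = ∑ k, (starRingEnd ℂ) (ψ k a) * ψ k b := by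
        simp [hT, map_sum, mul_comm]
      rw [this, hT]
      rw [Finset.sum_mul_sum]
    simp only [hGexp, hTexp]
    -- reorganize the four-fold sums
    have lhs_eq : ∑ j, ∑ k, ∑ a : Sym (Fin d) t, ∑ b : Sym (Fin d) t,
          ((starRingEnd ℂ) (ψ j a) * ψ k a) * (ψ j b * (starRingEnd ℂ) (ψ k b))
        = ∑ p : Fin n × Fin n, ∑ q : Sym (Fin d) t × Sym (Fin d) t,
          ((starRingEnd ℂ) (ψ p.1 q.1) * ψ p.2 q.1) * (ψ p.1 q.2 * (starRingEnd ℂ) (ψ p.2 q.2)) := by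
      rw [Fintype.sum_prod_type]
      refine Finset.sum_congr rfl fun j _ => ?_
      refine Finset.sum_congr rfl fun k _ => ?_
      rw [Fintype.sum_prod_type]
    have rhs_eq : ∑ a : Sym (Fin d) t, ∑ b : Sym (Fin d) t, ∑ j, ∑ k,
          (ψ j a * (starRingEnd ℂ) (ψ j b)) * ((starRingEnd ℂ) (ψ k a) * ψ k b)
        = ∑ q : Sym (Fin d) t × Sym (Fin d) t, ∑ p : Fin n × Fin n,
          (ψ p.1 q.1 * (starRingEnd ℂ) (ψ p.1 q.2)) * ((starRingEnd ℂ) (ψ p.2 q.1) * ψ p.2 q.2) := by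
      rw [Fintype.sum_prod_type]
      refine Finset.sum_congr rfl fun a _ => ?_
      refine Finset.sum_congr rfl fun b _ => ?_
      rw [Fintype.sum_prod_type]
    rw [lhs_eq, rhs_eq, Finset.sum_comm]
    refine Finset.sum_congr rfl fun q _ => ?_
    refine Fintype.sum_equiv (Equiv.prodComm (Fin n) (Fin n)) _ _ fun p => ?_
    simp only [Equiv.prodComm_apply, Prod.fst_swap, Prod.snd_swap]
    ring
  -- diagonal values
  set td : Sym (Fin d) t → ℝ := fun a => ∑ k, Complex.normSq (ψ k a) with htd
  have hTdiag : ∀ a : Sym (Fin d) t, T a a = ((td a : ℝ) : ℂ) := by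
    intro a
    simp [hT, htd, Complex.mul_conj]
  have hnorm1 : ∀ k : Fin n, ∑ a : Sym (Fin d) t, Complex.normSq (ψ k a) = 1 := by
    intro k
    have h := key k k
    rw [hunit k, one_pow] at h
    have h2 : ((∑ a : Sym (Fin d) t, Complex.normSq (ψ k a) : ℝ) : ℂ) = 1 := by
      push_cast
      rw [← h]
      refine Finset.sum_congr rfl fun a _ => ?_
      rw [mul_comm]
      exact (Complex.mul_conj _).symm
    exact_mod_cast h2
  have htrace : ∑ a : Sym (Fin d) t, td a = n := by
    rw [htd, Finset.sum_comm]
    simp [hnorm1]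
  -- cardinality
  have hDval : Fintype.card (Sym (Fin d) t) = (d + t - 1).choose t := by
    rw [Sym.card_sym_eq_choose, Fintype.card_fin]
  have hne : Nonempty (Sym (Fin d) t) := ⟨Sym.replicate t ⟨0, hd⟩⟩
  have hDpos : 0 < Fintype.card (Sym (Fin d) t) := Fintype.card_pos
  -- Cauchy-Schwarz chain
  have cheb : ((n : ℝ))^2
      ≤ (Fintype.card (Sym (Fin d) t) : ℝ) * ∑ a : Sym (Fin d) t, (td a)^2 := by
    have h := sq_sum_le_card_mul_sum_sq (s := (univ : Finset (Sym (Fin d) t))) (f := td)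
    rw [htrace] at h
    simpa [Finset.card_univ] using h
  have hdiag_le : ∑ a : Sym (Fin d) t, (td a)^2
      ≤ ∑ a : Sym (Fin d) t, ∑ b : Sym (Fin d) t, Complex.normSq (T a b) := by
    refine Finset.sum_le_sum fun a _ => ?_
    have h1 : (td a)^2 = Complex.normSq (T a a) := by
      rw [hTdiag a, Complex.normSq_ofReal, sq]
    rw [h1]
    exact Finset.single_le_sum (fun b _ => Complex.normSq_nonneg _) (Finset.mem_univ a)
  -- identify the target sum
  have target_eq : (∑ j, ∑ k, ‖star (φ j) ⬝ᵥ φ k‖^(2 * t) : ℝ)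
      = ∑ a : Sym (Fin d) t, ∑ b : Sym (Fin d) t, Complex.normSq (T a b) := by
    have lhs_eq : (∑ j, ∑ k, ‖star (φ j) ⬝ᵥ φ k‖^(2 * t) : ℝ)
        = ∑ j, ∑ k, Complex.normSq (G j k) := by
      refine Finset.sum_congr rfl fun j _ => Finset.sum_congr rfl fun k _ => ?_
      rw [hGval, ← Complex.sq_norm, norm_pow, ← pow_mul, mul_comm t 2]
    rw [lhs_eq]
    have c1 : ((∑ j, ∑ k, Complex.normSq (G j k) : ℝ) : ℂ)
        = ∑ j, ∑ k, G j k * (starRingEnd ℂ) (G j k) := by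
      push_cast
      exact Finset.sum_congr rfl fun j _ => Finset.sum_congr rfl fun k _ =>
        (Complex.mul_conj _).symm
    have c2 : ((∑ a : Sym (Fin d) t, ∑ b : Sym (Fin d) t, Complex.normSq (T a b) : ℝ) : ℂ)
        = ∑ a, ∑ b, T a b * (starRingEnd ℂ) (T a b) := by
      push_cast
      exact Finset.sum_congr rfl fun a _ => Finset.sum_congr rfl fun b _ =>
        (Complex.mul_conj _).symm
    have h3 := c1.trans (swap.trans c2.symm)
    exact_mod_cast h3
  -- final arithmetic
  have hfact : ((t + d - 1).factorial : ℝ)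
      = (Fintype.card (Sym (Fin d) t) : ℝ)
          * ((t.factorial : ℝ) * ((d - 1).factorial : ℝ)) := by
    have hle : t ≤ t + d - 1 := by omega
    have h := Nat.choose_mul_factorial_mul_factorial hle
    have hsub : t + d - 1 - t = d - 1 := by omega
    rw [hsub] at h
    have hch : (t + d - 1).choose t = Fintype.card (Sym (Fin d) t) := by
      rw [hDval]
      congr 1
      omega
    rw [hch] at h
    push_cast [← h]
    ring
  rw [target_eq, hfact]
  rw [div_le_iff₀ (by positivity)]
  have h2 : (n : ℝ)^2 ≤ (Fintype.card (Sym (Fin d) t) : ℝ)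
      * ∑ a : Sym (Fin d) t, ∑ b : Sym (Fin d) t, Complex.normSq (T a b) :=
    cheb.trans (mul_le_mul_of_nonneg_left hdiag_le (Nat.cast_nonneg _))
  have hfpos : (0 : ℝ) < (t.factorial : ℝ) * ((d-1).factorial : ℝ) := by positivity
  calc (n : ℝ)^2 * (t.factorial : ℝ) * ((d-1).factorial : ℝ)
      = (n : ℝ)^2 * ((t.factorial : ℝ) * ((d-1).factorial : ℝ)) := by ring
    _ ≤ ((Fintype.card (Sym (Fin d) t) : ℝ)
            * ∑ a : Sym (Fin d) t, ∑ b : Sym (Fin d) t, Complex.normSq (T a b))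
          * ((t.factorial : ℝ) * ((d-1).factorial : ℝ)) :=
        mul_le_mul_of_nonneg_right h2 (le_of_lt hfpos)
    _ = (∑ a : Sym (Fin d) t, ∑ b : Sym (Fin d) t, Complex.normSq (T a b))
          * ((Fintype.card (Sym (Fin d) t) : ℝ)
              * ((t.factorial : ℝ) * ((d-1).factorial : ℝ))) := by ring
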